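/- Let ε ≥ 0, 0 ≤ δ < 1, and 0 < p < e^{−ε}(1−δ). Then the crediting rollout G̃_p of the counterexample predictor M̃_p is not (ε,δ)-CCA: on the empty prompt λ, Pr[G̃_p({s1}, λ) credits s1] < 1, the conditional distribution of G̃_p({s1}, λ) given s1 not credited places probability 1 on the outcome (ab⊥, ∅), but G̃_p(∅, λ) places probability p < e^{−ε}(1−δ) on (ab⊥, ∅), so the (ε,δ)-closeness condition fails. -/

import Mathlib

open scoped ENNReal Classical

noncomputable section

namespace CCA

variable {α X D Y : Type*}

/-- Conditional probability of an event `E` given event `B`, for a set function `P`. -/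
def prCond (P : Set α → ℝ≥0∞) (B : Set α) : Set α → ℝ≥0∞ := fun E => P (E ∩ B) / P B

/-- `(ε,δ)`-closeness of two set functions, as in differential privacy. -/
def Close (ε δ : ℝ) (P Q : Set α → ℝ≥0∞) : Prop :=
  ∀ E : Set α,
    P E ≤ ENNReal.ofReal (Real.exp ε) * Q E + ENNReal.ofReal δ ∧
    Q E ≤ ENNReal.ofReal (Real.exp ε) * P E + ENNReal.ofReal δ

/-- `(ε,δ)`-counterfactual credit attribution for a kernel `K` mapping a dataset `S` and a
prompt `x` to a (sub)probability set function over (output, credit set) pairs: for every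
prompt, dataset and `s ∈ S`, either `s` is credited with probability `1`, or the conditional
distribution given `s` not credited is `(ε,δ)`-close to the counterfactual on `S \ {s}`. -/
def IsCCA (ε δ : ℝ) (K : Set D → List X → Set (Y × Set D) → ℝ≥0∞) : Prop :=
  ∀ (S : Set D) (x : List X) (s : D), s ∈ S →
    K S x {q | s ∈ q.2} = 1 ∨
    Close ε δ (prCond (K S x) {q | s ∉ q.2}) (K (S \ {s}) x)

/-- The event kernel associated with a PMF-valued crediting algorithm. -/
def pmfKernel (M : Set D → List X → PMF (Y × Set D)) :
    Set D → List X → Set (Y × Set D) → ℝ≥0∞ :=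
  fun S x E => (M S x).toOuterMeasure E

/-- Probability that the crediting rollout of `M` on current prompt `x` produces exactly the
trace `w` of (token, credit set) pairs. -/
def traceProb (M : Set D → List X → PMF (X × Set D)) (S : Set D) :
    List X → List (X × Set D) → ℝ≥0∞
  | _, [] => 1
  | x, q :: w => M S x q * traceProb M S (x ++ [q.1]) w

/-- A terminal trace: the last generated token is `bot` and no earlier token is `bot`. -/
def IsTerminal (bot : X) (w : List (X × Set D)) : Prop :=
  (w.map Prod.fst).getLast? = some bot ∧ ∀ y ∈ (w.map Prod.fst).dropLast, y ≠ bot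

/-- The union of the credit sets appearing along a trace. -/
def creditOf (w : List (X × Set D)) : Set D := w.foldr (fun q acc => q.2 ∪ acc) ∅

/-- Probability that the crediting rollout of `M` on `(S, x0)` outputs the
(generated string, credit set) pair `o`. -/
def rolloutProb (bot : X) (M : Set D → List X → PMF (X × Set D)) (S : Set D)
    (x0 : List X) (o : List X × Set D) : ℝ≥0∞ :=
  ∑' w : {w : List (X × Set D) //
      IsTerminal bot w ∧ x0 ++ w.map Prod.fst = o.1 ∧ creditOf w = o.2},
    traceProb M S x0 w.1

/-- Event kernel of the crediting rollout of `M`. -/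
def rolloutK (bot : X) (M : Set D → List X → PMF (X × Set D)) :
    Set D → List X → Set (List X × Set D) → ℝ≥0∞ :=
  fun S x0 E => ∑' o : E, rolloutProb bot M S x0 ↑o

/-- Coin flip: `true` with probability `min p 1`. -/
def coin (p : ℝ≥0∞) : PMF Bool := PMF.bernoulli (min p 1).toNNReal
  ((ENNReal.toNNReal_mono ENNReal.one_ne_top (min_le_right _ _)).trans_eq ENNReal.toNNReal_one)

/-- Two-point distribution: `x` with probability `p` (clipped at `1`), else `y`. -/
def twoPoint (p : ℝ≥0∞) (x y : α) : PMF α := PMF.map (fun b => if b then x else y) (coin p)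

/-- The token alphabet `{a, b, ⊥}` of the counterexample predictor. -/
inductive Tok : Type
  | a : Tok
  | b : Tok
  | bot : Tok
deriving DecidableEq

/-- The counterexample crediting next-token predictor `M̃_p`, over the data universe
`Unit = {s1}` (datasets and credit sets are `Set Unit`, with `{()} = {s1}`). -/
def Mp (p : ℝ) (S : Set Unit) (x : List Tok) : PMF (Tok × Set Unit) :=
  if x = [] then twoPoint (ENNReal.ofReal p) (Tok.a, (∅ : Set Unit)) (Tok.b, ∅)
  else if x = [Tok.a] then
    if S = ∅ then PMF.pure (Tok.b, ∅)
    else twoPoint (1 / 2) (Tok.a, Set.univ) (Tok.b, ∅)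
  else if x = [Tok.b] then
    if S = ∅ then PMF.pure (Tok.a, ∅) else PMF.pure (Tok.a, Set.univ)
  else PMF.pure (Tok.bot, ∅)

/-! ### Auxiliary lemmas -/

lemma twoPoint_apply_fst {q : ℝ≥0∞} {x y : α} (hxy : x ≠ y) : twoPoint q x y x = min q 1 := by
  rw [twoPoint, PMF.map_apply, tsum_bool]
  simp [coin, PMF.bernoulli_apply, hxy, Ne.symm hxy,
    ENNReal.coe_toNNReal (ne_top_of_le_ne_top ENNReal.one_ne_top (min_le_right q 1))]

lemma twoPoint_apply_snd {q : ℝ≥0∞} {x y : α} (hxy : x ≠ y) : twoPoint q x y y = 1 - min q 1 := by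
  rw [twoPoint, PMF.map_apply, tsum_bool]
  simp [coin, PMF.bernoulli_apply, hxy, Ne.symm hxy,
    ENNReal.coe_toNNReal (ne_top_of_le_ne_top ENNReal.one_ne_top (min_le_right q 1))]

lemma twoPoint_supp {q : ℝ≥0∞} {x y z : α} (h : twoPoint q x y z ≠ 0) : z = x ∨ z = y := by
  have hz : z ∈ (twoPoint q x y).support := (PMF.mem_support_iff _ _).2 h
  rw [twoPoint, PMF.support_map] at hz
  obtain ⟨b, -, hb⟩ := hz
  cases b
  · exact Or.inr hb.symm
  · exact Or.inl hb.symm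

lemma pure_supp {z w : α} (h : (PMF.pure w) z ≠ 0) : z = w := by
  have hz : z ∈ (PMF.pure w).support := (PMF.mem_support_iff _ _).2 h
  simpa using hz

lemma Mp_nil_supp {p : ℝ} {S : Set Unit} {q : Tok × Set Unit} (h : Mp p S [] q ≠ 0) :
    q = (Tok.a, (∅ : Set Unit)) ∨ q = (Tok.b, ∅) := by
  rw [Mp] at h; simp only [if_pos rfl] at h
  exact twoPoint_supp h

lemma Mp_a_supp {p : ℝ} {S : Set Unit} {q : Tok × Set Unit} (h : Mp p S [Tok.a] q ≠ 0) :
    q = (Tok.a, (Set.univ : Set Unit)) ∨ q = (Tok.b, ∅) := by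
  rw [Mp] at h
  simp only [reduceCtorEq, List.cons.injEq, and_true, if_false, if_pos rfl] at h
  by_cases hS : S = ∅
  · rw [if_pos hS] at h; exact Or.inr (pure_supp h)
  · rw [if_neg hS] at h; exact twoPoint_supp h

lemma Mp_b_supp {p : ℝ} {S : Set Unit} {q : Tok × Set Unit} (h : Mp p S [Tok.b] q ≠ 0) :
    q = (Tok.a, (Set.univ : Set Unit)) ∨ q = (Tok.a, ∅) := by
  rw [Mp] at h
  simp only [reduceCtorEq, List.cons.injEq, and_true, if_false, if_pos rfl] at h
  by_cases hS : S = ∅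
  · rw [if_pos hS] at h; exact Or.inr (pure_supp h)
  · rw [if_neg hS] at h; exact Or.inl (pure_supp h)

lemma Mp_long_supp {p : ℝ} {S : Set Unit} {x : List Tok} {q : Tok × Set Unit}
    (h1 : x ≠ []) (h2 : x ≠ [Tok.a]) (h3 : x ≠ [Tok.b]) (h : Mp p S x q ≠ 0) :
    q = (Tok.bot, (∅ : Set Unit)) := by
  rw [Mp, if_neg h1, if_neg h2, if_neg h3] at h
  exact pure_supp h

lemma traceProb_cons {M : Set D → List X → PMF (X × Set D)} {S : Set D} {x : List X}
    {q : X × Set D} {w : List (X × Set D)} :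
    traceProb M S x (q :: w) = M S x q * traceProb M S (x ++ [q.1]) w := rfl

lemma trace_char {p : ℝ} {S : Set Unit} {w : List (Tok × Set Unit)}
    (hT : IsTerminal Tok.bot w) (hne : traceProb (Mp p) S [] w ≠ 0) :
    ∃ q1 q2, w = [q1, q2, (Tok.bot, (∅ : Set Unit))] ∧
      (q1 = (Tok.a, (∅ : Set Unit)) ∨ q1 = (Tok.b, ∅)) ∧ Mp p S [q1.1] q2 ≠ 0 := by
  obtain ⟨hlast, hdrop⟩ := hT
  match w with
  | [] => simp [List.getLast?] at hlast
  | [q1] =>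
    rw [traceProb_cons] at hne
    obtain ⟨h1, -⟩ := mul_ne_zero_iff.1 hne
    rcases Mp_nil_supp h1 with rfl | rfl <;> simp at hlast
  | [q1, q2] =>
    rw [traceProb_cons, traceProb_cons] at hne
    obtain ⟨h1, hne⟩ := mul_ne_zero_iff.1 hne
    obtain ⟨h2, -⟩ := mul_ne_zero_iff.1 hne
    simp only [List.map_cons, List.map_nil, List.getLast?] at hlast
    rcases Mp_nil_supp h1 with rfl | rfl
    · rcases Mp_a_supp h2 with rfl | rfl <;> simp_all
    · rcases Mp_b_supp h2 with rfl | rfl <;> simp_all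
  | q1 :: q2 :: q3 :: rest =>
    rw [traceProb_cons, traceProb_cons, traceProb_cons] at hne
    obtain ⟨h1, hne⟩ := mul_ne_zero_iff.1 hne
    obtain ⟨h2, hne⟩ := mul_ne_zero_iff.1 hne
    obtain ⟨h3, -⟩ := mul_ne_zero_iff.1 hne
    have hq1 := Mp_nil_supp h1
    have hq3 : q3 = (Tok.bot, (∅ : Set Unit)) := by
      refine Mp_long_supp ?_ ?_ ?_ h3 <;>
        rcases hq1 with rfl | rfl <;> simp
    match rest with
    | [] =>
      refine ⟨q1, q2, by rw [hq3], hq1, ?_⟩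
      simpa using h2
    | q4 :: rest' =>
      exfalso
      refine hdrop Tok.bot ?_ rfl
      subst hq3
      simp [List.dropLast]

/-- The three nonzero-probability terminal traces on dataset `{()}`. -/
def wA : List (Tok × Set Unit) := [(Tok.a, ∅), (Tok.a, Set.univ), (Tok.bot, ∅)]
def wB : List (Tok × Set Unit) := [(Tok.a, ∅), (Tok.b, ∅), (Tok.bot, ∅)]
def wC : List (Tok × Set Unit) := [(Tok.b, ∅), (Tok.a, Set.univ), (Tok.bot, ∅)]
def wB' : List (Tok × Set Unit) := [(Tok.a, ∅), (Tok.b, ∅), (Tok.bot, ∅)]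
def wC' : List (Tok × Set Unit) := [(Tok.b, ∅), (Tok.a, ∅), (Tok.bot, ∅)]

def oA : List Tok × Set Unit := ([Tok.a, Tok.a, Tok.bot], Set.univ)
def oB : List Tok × Set Unit := ([Tok.a, Tok.b, Tok.bot], ∅)
def oC : List Tok × Set Unit := ([Tok.b, Tok.a, Tok.bot], Set.univ)
def oC' : List Tok × Set Unit := ([Tok.b, Tok.a, Tok.bot], ∅)

lemma trace_char1 {p : ℝ} {w : List (Tok × Set Unit)}
    (hT : IsTerminal Tok.bot w) (hne : traceProb (Mp p) {()} [] w ≠ 0) :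
    w = wA ∨ w = wB ∨ w = wC := by
  obtain ⟨q1, q2, rfl, hq1, h2⟩ := trace_char hT hne
  rcases hq1 with rfl | rfl
  · rcases Mp_a_supp h2 with rfl | rfl
    · exact Or.inl rfl
    · exact Or.inr (Or.inl rfl)
  · rcases Mp_b_supp h2 with rfl | rfl
    · exact Or.inr (Or.inr rfl)
    · exfalso
      apply h2
      rw [Mp]
      simp [Set.singleton_ne_empty, PMF.pure_apply, Set.empty_ne_univ]

lemma trace_char0 {p : ℝ} {w : List (Tok × Set Unit)}
    (hT : IsTerminal Tok.bot w) (hne : traceProb (Mp p) ∅ [] w ≠ 0) :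
    w = wB' ∨ w = wC' := by
  obtain ⟨q1, q2, rfl, hq1, h2⟩ := trace_char hT hne
  rcases hq1 with rfl | rfl
  · left
    have : q2 = (Tok.b, (∅ : Set Unit)) := by
      rw [Mp] at h2
      simp only [reduceCtorEq, List.cons.injEq, and_true, if_false, if_pos rfl, if_true] at h2
      exact pure_supp h2
    rw [this]; rfl
  · right
    have : q2 = (Tok.a, (∅ : Set Unit)) := by
      rw [Mp] at h2
      simp only [reduceCtorEq, List.cons.injEq, and_true, if_false, if_pos rfl, if_true] at h2
      exact pure_supp h2
    rw [this]; rfl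

lemma rolloutProb_eq_single {p : ℝ} {S : Set Unit} {o : List Tok × Set Unit}
    (w0 : List (Tok × Set Unit))
    (h0 : IsTerminal Tok.bot w0 ∧ [] ++ w0.map Prod.fst = o.1 ∧ creditOf w0 = o.2)
    (huniq : ∀ w : List (Tok × Set Unit), IsTerminal Tok.bot w → w.map Prod.fst = o.1 →
      creditOf w = o.2 → traceProb (Mp p) S [] w ≠ 0 → w = w0) :
    rolloutProb Tok.bot (Mp p) S [] o = traceProb (Mp p) S [] w0 := by
  rw [rolloutProb]
  apply tsum_eq_single (⟨w0, h0⟩ : {w : List (Tok × Set Unit) //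
      IsTerminal Tok.bot w ∧ [] ++ w.map Prod.fst = o.1 ∧ creditOf w = o.2})
  intro w hw
  by_contra hne
  exact hw (Subtype.ext (huniq w.1 w.2.1 (by simpa using w.2.2.1) w.2.2.2 hne))

lemma rolloutProb_eq_zero {p : ℝ} {S : Set Unit} {o : List Tok × Set Unit}
    (huniq : ∀ w : List (Tok × Set Unit), IsTerminal Tok.bot w → w.map Prod.fst = o.1 →
      creditOf w = o.2 → traceProb (Mp p) S [] w = 0) :
    rolloutProb Tok.bot (Mp p) S [] o = 0 := by
  rw [rolloutProb, ENNReal.tsum_eq_zero]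
  intro w
  exact huniq w.1 w.2.1 (by simpa using w.2.2.1) w.2.2.2

lemma half_min : min (1/2 : ℝ≥0∞) 1 = 1/2 := min_eq_left (by norm_num)

lemma one_sub_half : (1 : ℝ≥0∞) - 1/2 = 1/2 := by
  simpa using ENNReal.sub_half (a := (1:ℝ≥0∞)) one_ne_top

lemma Mp_nil_a {p : ℝ} (S : Set Unit) :
    Mp p S [] (Tok.a, (∅ : Set Unit)) = min (ENNReal.ofReal p) 1 := by
  rw [Mp, if_pos rfl]; exact twoPoint_apply_fst (by simp)

lemma Mp_nil_b {p : ℝ} (S : Set Unit) :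
    Mp p S [] (Tok.b, (∅ : Set Unit)) = 1 - min (ENNReal.ofReal p) 1 := by
  rw [Mp, if_pos rfl]; exact twoPoint_apply_snd (by simp)

lemma Mp_a_a {p : ℝ} : Mp p {()} [Tok.a] (Tok.a, (Set.univ : Set Unit)) = 1/2 := by
  rw [Mp]
  simp only [reduceCtorEq, List.cons.injEq, and_true, if_false, if_true,
    if_neg (Set.singleton_ne_empty ())]
  rw [twoPoint_apply_fst (by simp [Set.empty_ne_univ]), half_min]

lemma Mp_a_b {p : ℝ} : Mp p {()} [Tok.a] (Tok.b, (∅ : Set Unit)) = 1/2 := by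
  rw [Mp]
  simp only [reduceCtorEq, List.cons.injEq, and_true, if_false, if_true,
    if_neg (Set.singleton_ne_empty ())]
  rw [twoPoint_apply_snd (by simp [Set.empty_ne_univ]), half_min, one_sub_half]

lemma Mp_b_a {p : ℝ} : Mp p {()} [Tok.b] (Tok.a, (Set.univ : Set Unit)) = 1 := by
  rw [Mp]
  simp [Set.singleton_ne_empty, PMF.pure_apply]

lemma Mp_emp_a {p : ℝ} : Mp p ∅ [Tok.a] (Tok.b, (∅ : Set Unit)) = 1 := by
  rw [Mp]; simp [PMF.pure_apply]

lemma Mp_emp_b {p : ℝ} : Mp p ∅ [Tok.b] (Tok.a, (∅ : Set Unit)) = 1 := by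
  rw [Mp]; simp [PMF.pure_apply]

lemma Mp_two {p : ℝ} (S : Set Unit) (t1 t2 : Tok) :
    Mp p S [t1, t2] (Tok.bot, (∅ : Set Unit)) = 1 := by
  rw [Mp]; simp [PMF.pure_apply]

lemma tpA {p : ℝ} : traceProb (Mp p) {()} [] wA = min (ENNReal.ofReal p) 1 * (1/2) := by
  show Mp p {()} [] _ * (Mp p {()} [Tok.a] _ * (Mp p {()} [Tok.a, Tok.a] _ * 1)) = _
  rw [Mp_nil_a, Mp_a_a, Mp_two, mul_one, mul_one]

lemma tpB {p : ℝ} : traceProb (Mp p) {()} [] wB = min (ENNReal.ofReal p) 1 * (1/2) := by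
  show Mp p {()} [] _ * (Mp p {()} [Tok.a] _ * (Mp p {()} [Tok.a, Tok.b] _ * 1)) = _
  rw [Mp_nil_a, Mp_a_b, Mp_two, mul_one, mul_one]

lemma tpC {p : ℝ} : traceProb (Mp p) {()} [] wC = 1 - min (ENNReal.ofReal p) 1 := by
  show Mp p {()} [] _ * (Mp p {()} [Tok.b] _ * (Mp p {()} [Tok.b, Tok.a] _ * 1)) = _
  rw [Mp_nil_b, Mp_b_a, Mp_two, mul_one, one_mul, mul_one]

lemma tpB' {p : ℝ} : traceProb (Mp p) ∅ [] wB' = min (ENNReal.ofReal p) 1 := by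
  show Mp p ∅ [] _ * (Mp p ∅ [Tok.a] _ * (Mp p ∅ [Tok.a, Tok.b] _ * 1)) = _
  rw [Mp_nil_a, Mp_emp_a, Mp_two, mul_one, one_mul, mul_one]

lemma tpC' {p : ℝ} : traceProb (Mp p) ∅ [] wC' = 1 - min (ENNReal.ofReal p) 1 := by
  show Mp p ∅ [] _ * (Mp p ∅ [Tok.b] _ * (Mp p ∅ [Tok.b, Tok.a] _ * 1)) = _
  rw [Mp_nil_b, Mp_emp_b, Mp_two, mul_one, one_mul, mul_one]

lemma rolloutProb1 {p : ℝ} (o : List Tok × Set Unit) :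
    rolloutProb Tok.bot (Mp p) {()} [] o =
      if o = oA then min (ENNReal.ofReal p) 1 * (1/2)
      else if o = oB then min (ENNReal.ofReal p) 1 * (1/2)
      else if o = oC then 1 - min (ENNReal.ofReal p) 1
      else 0 := by
  split_ifs with h1 h2 h3
  · subst h1
    rw [← tpA]
    refine rolloutProb_eq_single wA ⟨?_, ?_, ?_⟩ ?_
    · constructor <;> simp [wA, List.dropLast]
    · simp [wA, oA]
    · simp [wA, oA, creditOf]
    · intro w hT hmap hcred hne
      rcases trace_char1 hT hne with rfl | rfl | rfl
      · rfl
      · simp [wB, oA] at hmap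
      · simp [wC, oA] at hmap
  · subst h2
    rw [← tpB]
    refine rolloutProb_eq_single wB ⟨?_, ?_, ?_⟩ ?_
    · constructor <;> simp [wB, List.dropLast]
    · simp [wB, oB]
    · simp [wB, oB, creditOf]
    · intro w hT hmap hcred hne
      rcases trace_char1 hT hne with rfl | rfl | rfl
      · simp [wA, oB] at hmap
      · rfl
      · simp [wC, oB] at hmap
  · subst h3
    rw [← tpC]
    refine rolloutProb_eq_single wC ⟨?_, ?_, ?_⟩ ?_
    · constructor <;> simp [wC, List.dropLast]
    · simp [wC, oC]
    · simp [wC, oC, creditOf]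
    · intro w hT hmap hcred hne
      rcases trace_char1 hT hne with rfl | rfl | rfl
      · simp [wA, oC] at hmap
      · simp [wB, oC] at hmap
      · rfl
  · refine rolloutProb_eq_zero ?_
    intro w hT hmap hcred
    by_contra hne
    rcases trace_char1 hT hne with rfl | rfl | rfl
    · exact h1 (Prod.ext (by simpa [wA, oA] using hmap)
        (by simpa [wA, oA, creditOf] using hcred)).symm
    · exact h2 (Prod.ext (by simpa [wB, oB] using hmap)
        (by simpa [wB, oB, creditOf] using hcred)).symm
    · exact h3 (Prod.ext (by simpa [wC, oC] using hmap)
        (by simpa [wC, oC, creditOf] using hcred)).symm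

lemma rolloutProb0 {p : ℝ} (o : List Tok × Set Unit) :
    rolloutProb Tok.bot (Mp p) ∅ [] o =
      if o = oB then min (ENNReal.ofReal p) 1
      else if o = oC' then 1 - min (ENNReal.ofReal p) 1
      else 0 := by
  split_ifs with h1 h2
  · subst h1
    rw [← tpB']
    refine rolloutProb_eq_single wB' ⟨?_, ?_, ?_⟩ ?_
    · constructor <;> simp [wB', List.dropLast]
    · simp [wB', oB]
    · simp [wB', oB, creditOf]
    · intro w hT hmap hcred hne
      rcases trace_char0 hT hne with rfl | rfl
      · rfl
      · simp [wC', oB] at hmap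
  · subst h2
    rw [← tpC']
    refine rolloutProb_eq_single wC' ⟨?_, ?_, ?_⟩ ?_
    · constructor <;> simp [wC', List.dropLast]
    · simp [wC', oC']
    · simp [wC', oC', creditOf]
    · intro w hT hmap hcred hne
      rcases trace_char0 hT hne with rfl | rfl
      · simp [wB', oC'] at hmap
      · rfl
  · refine rolloutProb_eq_zero ?_
    intro w hT hmap hcred
    by_contra hne
    rcases trace_char0 hT hne with rfl | rfl
    · exact h1 (Prod.ext (by simpa [wB', oB] using hmap)
        (by simpa [wB', oB, creditOf] using hcred)).symm
    · exact h2 (Prod.ext (by simpa [wC', oC'] using hmap)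
        (by simpa [wC', oC', creditOf] using hcred)).symm

lemma oA_ne_oB : oA ≠ oB := by simp [oA, oB]
lemma oA_ne_oC : oA ≠ oC := by simp [oA, oC]
lemma oB_ne_oC : oB ≠ oC := by simp [oB, oC]
lemma oB_ne_oC' : oB ≠ oC' := by simp [oB, oC']

lemma rolloutK1 {p : ℝ} (E : Set (List Tok × Set Unit)) :
    rolloutK Tok.bot (Mp p) {()} [] E =
      (if oA ∈ E then min (ENNReal.ofReal p) 1 * (1/2) else 0) +
      (if oB ∈ E then min (ENNReal.ofReal p) 1 * (1/2) else 0) +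
      (if oC ∈ E then 1 - min (ENNReal.ofReal p) 1 else 0) := by
  rw [rolloutK]
  rw [tsum_subtype E (rolloutProb Tok.bot (Mp p) {()} [])]
  rw [tsum_eq_sum (s := ({oA, oB, oC} : Finset (List Tok × Set Unit)))
    (fun o ho => by
      rw [Set.indicator_apply]
      split_ifs with hE
      · rw [rolloutProb1 o]
        simp only [Finset.mem_insert, Finset.mem_singleton, not_or] at ho
        rw [if_neg ho.1, if_neg ho.2.1, if_neg ho.2.2]
      · rfl)]
  rw [Finset.sum_insert (by simp [oA_ne_oB, oA_ne_oC]),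
    Finset.sum_insert (by simp [oB_ne_oC]), Finset.sum_singleton]
  rw [← add_assoc]
  congr 1
  · congr 1
    · rw [Set.indicator_apply]
      split_ifs <;> simp [rolloutProb1]
    · rw [Set.indicator_apply]
      split_ifs <;> simp [rolloutProb1, oA_ne_oB.symm]
  · rw [Set.indicator_apply]
    split_ifs <;> simp [rolloutProb1, oA_ne_oC.symm, oB_ne_oC.symm]

lemma rolloutK0 {p : ℝ} (E : Set (List Tok × Set Unit)) :
    rolloutK Tok.bot (Mp p) ∅ [] E =
      (if oB ∈ E then min (ENNReal.ofReal p) 1 else 0) +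
      (if oC' ∈ E then 1 - min (ENNReal.ofReal p) 1 else 0) := by
  rw [rolloutK]
  rw [tsum_subtype E (rolloutProb Tok.bot (Mp p) ∅ [])]
  rw [tsum_eq_sum (s := ({oB, oC'} : Finset (List Tok × Set Unit)))
    (fun o ho => by
      rw [Set.indicator_apply]
      split_ifs with hE
      · rw [rolloutProb0 o]
        simp only [Finset.mem_insert, Finset.mem_singleton, not_or] at ho
        rw [if_neg ho.1, if_neg ho.2]
      · rfl)]
  rw [Finset.sum_insert (by simp [oB_ne_oC']), Finset.sum_singleton]
  congr 1
  · rw [Set.indicator_apply]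
    split_ifs <;> simp [rolloutProb0]
  · rw [Set.indicator_apply]
    split_ifs <;> simp [rolloutProb0, oB_ne_oC'.symm]

/-- For `ε ≥ 0`, `0 ≤ δ < 1` and `0 < p < e^{-ε}(1-δ)`, the crediting rollout `G̃_p` of the
counterexample predictor `M̃_p` is not `(ε,δ)`-CCA: on the empty prompt, `s1` is credited with
probability `< 1`, the conditional distribution given `s1` not credited puts mass `1` on the
outcome `(ab⊥, ∅)`, the counterfactual puts mass `p < e^{-ε}(1-δ)` on it, and
`(ε,δ)`-closeness fails. -/
theorem stmt2 (ε δ p : ℝ) (hε : 0 ≤ ε) (hδ0 : 0 ≤ δ) (hδ1 : δ < 1)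
    (hp0 : 0 < p) (hp : p < Real.exp (-ε) * (1 - δ)) :
    rolloutK Tok.bot (Mp p) {()} [] {q : List Tok × Set Unit | () ∈ q.2} < 1 ∧
    prCond (rolloutK Tok.bot (Mp p) {()} []) {q | () ∉ q.2}
        {([Tok.a, Tok.b, Tok.bot], (∅ : Set Unit))} = 1 ∧
    rolloutK Tok.bot (Mp p) ∅ [] {([Tok.a, Tok.b, Tok.bot], (∅ : Set Unit))} =
        ENNReal.ofReal p ∧
    ¬ Close ε δ (prCond (rolloutK Tok.bot (Mp p) {()} []) {q | () ∉ q.2})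
        (rolloutK Tok.bot (Mp p) ∅ []) := by
  have hexp1 : Real.exp ε * (Real.exp (-ε) * (1 - δ)) = 1 - δ := by
    rw [← mul_assoc, ← Real.exp_add]; simp
  have hp1 : p < 1 := by
    have h1 : Real.exp (-ε) ≤ 1 := Real.exp_le_one_iff.2 (neg_nonpos.2 hε)
    nlinarith [Real.exp_pos (-ε)]
  have hmin : min (ENNReal.ofReal p) 1 = ENNReal.ofReal p :=
    min_eq_left (ENNReal.ofReal_le_one.2 hp1.le)
  have hPhalf : ENNReal.ofReal p * (1/2) = ENNReal.ofReal (p / 2) := by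
    rw [ENNReal.ofReal_div_of_pos (by norm_num), ENNReal.ofReal_ofNat, one_div, ← div_eq_mul_inv]
  have hPsub : (1 : ℝ≥0∞) - ENNReal.ofReal p = ENNReal.ofReal (1 - p) := by
    rw [ENNReal.ofReal_sub 1 hp0.le, ENNReal.ofReal_one]
  have c1 : rolloutK Tok.bot (Mp p) {()} [] {q : List Tok × Set Unit | () ∈ q.2} < 1 := by
    rw [rolloutK1, hmin, if_pos (by simp [oA]), if_neg (by simp [oB]), if_pos (by simp [oC])]
    rw [add_zero, hPhalf, hPsub, ← ENNReal.ofReal_add (by linarith) (by linarith),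
      ENNReal.ofReal_lt_one]
    linarith
  have c2 : prCond (rolloutK Tok.bot (Mp p) {()} []) {q | () ∉ q.2}
      {([Tok.a, Tok.b, Tok.bot], (∅ : Set Unit))} = 1 := by
    simp only [prCond]
    rw [rolloutK1, rolloutK1, hmin]
    rw [if_neg (by simp [oA]), if_pos (by simp [oB]), if_neg (by simp [oC]),
      if_neg (by simp [oA]), if_pos (by simp [oB]), if_neg (by simp [oC])]
    rw [zero_add, add_zero]
    exact ENNReal.div_self (mul_ne_zero (ne_of_gt (ENNReal.ofReal_pos.2 hp0)) (by norm_num))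
      (ENNReal.mul_ne_top ENNReal.ofReal_ne_top (by norm_num))
  have c3 : rolloutK Tok.bot (Mp p) ∅ [] {([Tok.a, Tok.b, Tok.bot], (∅ : Set Unit))} =
      ENNReal.ofReal p := by
    rw [rolloutK0, hmin, if_pos (by simp [oB]), if_neg (by simp [oC']), add_zero]
  refine ⟨c1, c2, c3, ?_⟩
  intro hC
  have h := (hC {([Tok.a, Tok.b, Tok.bot], (∅ : Set Unit))}).1
  rw [c2, c3, ← ENNReal.ofReal_mul (Real.exp_nonneg ε),
    ← ENNReal.ofReal_add (by positivity) hδ0, ENNReal.one_le_ofReal] at h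
  have h2 : Real.exp ε * p < 1 - δ := by
    calc Real.exp ε * p < Real.exp ε * (Real.exp (-ε) * (1 - δ)) :=
          mul_lt_mul_of_pos_left hp (Real.exp_pos ε)
      _ = 1 - δ := hexp1
  linarith

end CCA
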